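/- Let f : ℝ^n → ℝ be differentiable with gradient ∇f, L-smooth and μ-strongly convex with 0 < μ ≤ L; let δ ≥ 0 and let g̃ satisfy the absolute noise condition with parameter δ. Then for all x, y ∈ ℝ^n: (μ/4)·‖y − x‖² ≤ f(y) − (f(x) − δ²/μ) − ⟪g̃(x), y − x⟫ ≤ L·‖y − x‖² + 2δ²/μ; in other words, the pair (g̃(x), f(x) − δ²/μ) is a (2δ²/μ, 2L, μ/2) inexact oracle for f at every point x. -/
import Mathlib


open scoped InnerProductSpace

/-- A gradient estimate with absolute noise yields an inexact `(2δ²/μ, 2L, μ/2)` oracle: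
the pair `(g̃ x, f x − δ²/μ)` satisfies the corresponding two-sided quadratic bounds. -/
theorem abs_noise_inexact_oracle {n : ℕ} (f : EuclideanSpace ℝ (Fin n) → ℝ)
    (f' g : EuclideanSpace ℝ (Fin n) → EuclideanSpace ℝ (Fin n))
    (hgrad : ∀ x, HasGradientAt f (f' x) x)
    (μ L : ℝ) (hμ : 0 < μ) (hμL : μ ≤ L)
    (hsmooth : ∀ x y : EuclideanSpace ℝ (Fin n),
      f y ≤ f x + ⟪f' x, y - x⟫_ℝ + L / 2 * ‖y - x‖ ^ 2)
    (hsc : ∀ x y : EuclideanSpace ℝ (Fin n),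
      f x + ⟪f' x, y - x⟫_ℝ + μ / 2 * ‖x - y‖ ^ 2 ≤ f y)
    (δ : ℝ) (hδ : 0 ≤ δ)
    (hnoise : ∀ x, ‖g x - f' x‖ ≤ δ) :
    ∀ x y : EuclideanSpace ℝ (Fin n),
      (μ / 4) * ‖y - x‖ ^ 2 ≤ f y - (f x - δ ^ 2 / μ) - ⟪g x, y - x⟫_ℝ ∧
      f y - (f x - δ ^ 2 / μ) - ⟪g x, y - x⟫_ℝ ≤ L * ‖y - x‖ ^ 2 + 2 * δ ^ 2 / μ := by
  intro x y
  have key : |⟪g x - f' x, y - x⟫_ℝ| ≤ δ * ‖y - x‖ := by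
    calc |⟪g x - f' x, y - x⟫_ℝ| ≤ ‖g x - f' x‖ * ‖y - x‖ := abs_real_inner_le_norm _ _
    _ ≤ δ * ‖y - x‖ := by
        exact mul_le_mul_of_nonneg_right (hnoise x) (norm_nonneg _)
  have hsplit : ⟪g x, y - x⟫_ℝ = ⟪f' x, y - x⟫_ℝ + ⟪g x - f' x, y - x⟫_ℝ := by
    rw [inner_sub_left]; ring
  have hamgm : δ * ‖y - x‖ ≤ δ ^ 2 / μ + μ / 4 * ‖y - x‖ ^ 2 := by
    have h := sq_nonneg (2 * δ - μ * ‖y - x‖)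
    rw [div_add' _ _ _ (ne_of_gt hμ), le_div_iff₀ hμ]
    nlinarith
  have h1 := hsc x y
  have h2 := hsmooth x y
  have habs := abs_le.mp key
  have hnorm : ‖x - y‖ = ‖y - x‖ := norm_sub_rev _ _
  rw [hnorm] at h1
  constructor
  · rw [hsplit]; nlinarith
  · rw [hsplit]
    have hd : 0 ≤ δ ^ 2 / μ := div_nonneg (sq_nonneg _) hμ.le
    have : 2 * δ ^ 2 / μ = δ ^ 2 / μ + δ ^ 2 / μ := by ring
    nlinarith
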